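/- Let ∇ ⊂ ℝ⁴ be defined by x,y,z ≥ 0, w ≥ 0, x+y-z ≥ 0, 1-x-y-w ≥ 0. For every positive integer n, the number of lattice points in n∇ equals C(n+4,4) + C(n+3,4) = (2n⁴ + 16n³ + 46n² + 56n + 24)/24. -/

import Mathlib

open Finset

-- choose formulas
lemma c2 (n : ℕ) : 2 * Nat.choose (n+2) 2 = (n+1)*(n+2) := by
  induction n with
  | zero => decide
  | succ m ih =>
    have h : m+3 = (m+2)+1 := rfl
    rw [h, Nat.choose_succ_succ, Nat.mul_add, ih, Nat.choose_one_right]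
    ring
lemma c3 (n : ℕ) : 6 * Nat.choose (n+3) 3 = (n+1)*(n+2)*(n+3) := by
  induction n with
  | zero => decide
  | succ m ih =>
    have h : m+4 = (m+3)+1 := rfl
    rw [h, Nat.choose_succ_succ, Nat.mul_add, ih]
    have : (6:ℕ) * Nat.choose (m+3) 2 = 3 * (2 * Nat.choose ((m+1)+2) 2) := by ring_nf
    rw [this, c2]
    ring
lemma c4 (n : ℕ) : 24 * Nat.choose (n+4) 4 = (n+1)*(n+2)*(n+3)*(n+4) := by
  induction n with
  | zero => decide
  | succ m ih =>
    have h : m+5 = (m+4)+1 := rfl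
    rw [h, Nat.choose_succ_succ, Nat.mul_add, ih]
    have : (24:ℕ) * Nat.choose (m+4) 3 = 4 * (6 * Nat.choose ((m+1)+3) 3) := by ring_nf
    rw [this, c3]
    ring
lemma c4' (n : ℕ) : 24 * Nat.choose (n+3) 4 = n*(n+1)*(n+2)*(n+3) := by
  cases n with
  | zero => decide
  | succ m => have := c4 m; rw [show m+1+3 = m+4 from rfl, this]

lemma sumsq (m : ℕ) : 6 * ∑ s ∈ range m, (s+1)*(s+1) = m*(m+1)*(2*m+1) := by
  induction m with
  | zero => simp
  | succ k ih => rw [sum_range_succ, Nat.mul_add, ih]; ring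

def A (n : ℕ) : ℕ := ∑ s ∈ range (n+1), (s+1)*((s+1)*(n+1-s))

lemma keyA (n : ℕ) : 24 * A n = (n+1)*(n+2)*(n+3)*(n+4) + n*(n+1)*(n+2)*(n+3) := by
  induction n with
  | zero => simp [A]
  | succ k ih =>
    have h1 : A (k+1) = A k + ∑ s ∈ range (k+2), (s+1)*(s+1) := by
      unfold A
      have hc : ∀ s ∈ range (k+2),
          (s+1)*((s+1)*(k+1+1-s)) = (s+1)*((s+1)*(k+1-s)) + (s+1)*(s+1) := by
        intro s hs
        have hs' : s ≤ k+1 := by simpa [Nat.lt_succ_iff] using mem_range.mp hs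
        have h2 : k+1+1-s = (k+1-s)+1 := by omega
        rw [h2]; ring
      rw [sum_congr rfl hc, sum_add_distrib, sum_range_succ _ (k+1)]
      simp
    rw [h1, Nat.mul_add, ih]
    have h6 : (24:ℕ) * ∑ s ∈ range (k+2), (s+1)*(s+1) = 4 * ((k+2)*(k+3)*(2*(k+2)+1)) := by
      rw [show (24:ℕ) * ∑ s ∈ range (k+2), (s+1)*(s+1)
          = 4 * (6 * ∑ s ∈ range (k+2), (s+1)*(s+1)) by ring, sumsq]
    rw [h6]; ring

lemma reindex (m : ℕ) (f : ℕ → ℕ) (hf : ∀ s, m ≤ s → f s = 0) :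
    ∑ x ∈ range m, ∑ y ∈ range m, f (x+y) = ∑ s ∈ range m, (s+1) * f s := by
  have h1 : ∀ x ∈ range m, ∑ y ∈ range m, f (x+y) = ∑ y ∈ range (m-x), f (x+y) := by
    intro x hx
    refine (sum_subset (range_subset_range.2 (by omega)) ?_).symm
    intro y hy hny
    simp only [mem_range] at hy hny
    exact hf _ (by omega)
  rw [sum_congr rfl h1, ← Finset.sum_range_diag_flip m (fun a b => f (a+b))]
  refine sum_congr rfl fun s hs => ?_
  have h2 : ∀ k ∈ range (s+1), f (k + (s-k)) = f s := by
    intro k hk; simp only [mem_range, Nat.lt_succ_iff] at hk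
    rw [Nat.add_sub_cancel' hk]
  rw [sum_congr rfl h2, sum_const, card_range, smul_eq_mul]

lemma inner2 (n m : ℕ) :
    (∑ z ∈ range (n+1), ∑ w ∈ range (n+1), if z ≤ m ∧ m + w ≤ n then (1:ℕ) else 0)
      = (m+1)*(n+1-m) := by
  have hW : ∀ z, (∑ w ∈ range (n+1), if z ≤ m ∧ m + w ≤ n then (1:ℕ) else 0)
      = if z ≤ m then n+1-m else 0 := by
    intro z
    by_cases hz : z ≤ m
    · simp only [hz, true_and, if_true]
      rw [← card_filter]
      have he : (range (n+1)).filter (fun w => m + w ≤ n) = range (n+1-m) := by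
        ext w; simp only [mem_filter, mem_range]; omega
      rw [he, card_range]
    · simp [hz]
  simp only [hW]
  rw [sum_ite, sum_const, sum_const, smul_eq_mul, smul_eq_mul, mul_zero, add_zero]
  have he : (range (n+1)).filter (fun z => z ≤ m) = range (min (m+1) (n+1)) := by
    ext z; simp only [mem_filter, mem_range, lt_min_iff]; omega
  rw [he, card_range]
  rcases le_or_gt m n with h | h
  · rw [min_eq_left (by omega)]
  · rw [Nat.sub_eq_zero_of_le (by omega), mul_zero, mul_zero]

def N (n : ℕ) : Finset (ℕ × ℕ × ℕ × ℕ) :=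
  (range (n+1) ×ˢ range (n+1) ×ˢ range (n+1) ×ˢ range (n+1)).filter
    (fun v => v.2.2.1 ≤ v.1 + v.2.1 ∧ v.1 + v.2.1 + v.2.2.2 ≤ n)

lemma cardN (n : ℕ) : (N n).card = A n := by
  rw [N, card_filter]
  simp only [Finset.sum_product]
  have h := fun (x y : ℕ) => inner2 n (x+y)
  simp only [h]
  rw [reindex (n+1) (fun s => (s+1)*(n+1-s)) (fun s hs => by simp; omega)]
  rfl



open Pointwise

def nabla : Set (ℝ × ℝ × ℝ × ℝ) :=
  {p : ℝ × ℝ × ℝ × ℝ |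
    0 ≤ p.1 ∧
    0 ≤ p.2.1 ∧
    0 ≤ p.2.2.1 ∧
    0 ≤ p.2.2.2 ∧
    0 ≤ p.1 + p.2.1 - p.2.2.1 ∧
    0 ≤ 1 - p.1 - p.2.1 - p.2.2.2}

lemma mem_iff (n : ℕ) (hn : 0 < n) (v : ℤ × ℤ × ℤ × ℤ) :
    ((((v.1:ℝ), (v.2.1:ℝ), (v.2.2.1:ℝ), (v.2.2.2:ℝ)) : ℝ × ℝ × ℝ × ℝ) ∈ (n:ℝ) • nabla) ↔
    (0 ≤ v.1 ∧ 0 ≤ v.2.1 ∧ 0 ≤ v.2.2.1 ∧ 0 ≤ v.2.2.2 ∧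
      v.2.2.1 ≤ v.1 + v.2.1 ∧ v.1 + v.2.1 + v.2.2.2 ≤ (n:ℤ)) := by
  obtain ⟨a, b, c, d⟩ := v
  have hn' : (0:ℝ) < n := by exact_mod_cast hn
  have hne : (n:ℝ) ≠ 0 := hn'.ne'
  simp only [Set.mem_smul_set, nabla, Set.mem_setOf_eq]
  constructor
  · rintro ⟨⟨p1,p2,p3,p4⟩, ⟨h1,h2,h3,h4,h5,h6⟩, heq⟩
    simp only [Prod.smul_mk, smul_eq_mul, Prod.mk.injEq] at heq
    obtain ⟨e1, e2, e3, e4⟩ := heq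
    have ra : (0:ℝ) ≤ (a:ℝ) := by rw [← e1]; exact mul_nonneg hn'.le h1
    have rb : (0:ℝ) ≤ (b:ℝ) := by rw [← e2]; exact mul_nonneg hn'.le h2
    have rc : (0:ℝ) ≤ (c:ℝ) := by rw [← e3]; exact mul_nonneg hn'.le h3
    have rd : (0:ℝ) ≤ (d:ℝ) := by rw [← e4]; exact mul_nonneg hn'.le h4
    have r5 : (c:ℝ) ≤ (a:ℝ) + (b:ℝ) := by
      rw [← e1, ← e2, ← e3]; nlinarith
    have r6 : (a:ℝ) + (b:ℝ) + (d:ℝ) ≤ (n:ℝ) := by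
      rw [← e1, ← e2, ← e4]; nlinarith
    refine ⟨by exact_mod_cast ra, by exact_mod_cast rb, by exact_mod_cast rc,
      by exact_mod_cast rd, by exact_mod_cast r5, by exact_mod_cast r6⟩
  · rintro ⟨h1, h2, h3, h4, h5, h6⟩
    refine ⟨((a:ℝ)/n, (b:ℝ)/n, (c:ℝ)/n, (d:ℝ)/n), ⟨?_, ?_, ?_, ?_, ?_, ?_⟩, ?_⟩
    · exact div_nonneg (by exact_mod_cast h1) hn'.le
    · exact div_nonneg (by exact_mod_cast h2) hn'.le
    · exact div_nonneg (by exact_mod_cast h3) hn'.le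
    · exact div_nonneg (by exact_mod_cast h4) hn'.le
    · rw [← add_div, div_sub_div_same]
      exact div_nonneg (by rw [sub_nonneg]; exact_mod_cast h5) hn'.le
    · have key : (a:ℝ) + (b:ℝ) + (d:ℝ) ≤ (n:ℝ) := by exact_mod_cast h6
      have hdv : ((a:ℝ) + b + d) / n ≤ 1 := (div_le_one hn').mpr key
      have hsum : (a:ℝ)/n + (b:ℝ)/n + (d:ℝ)/n = ((a:ℝ) + b + d)/n := by ring
      linarith [hsum]
    · simp only [Prod.smul_mk, smul_eq_mul, Prod.mk.injEq]
      refine ⟨?_, ?_, ?_, ?_⟩ <;> field_simp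

def ι : (ℕ × ℕ × ℕ × ℕ) ↪ (ℤ × ℤ × ℤ × ℤ) :=
  ⟨fun v => ((v.1 : ℤ), (v.2.1 : ℤ), (v.2.2.1 : ℤ), (v.2.2.2 : ℤ)), by
    rintro ⟨a1,a2,a3,a4⟩ ⟨b1,b2,b3,b4⟩ h
    simp only [Prod.mk.injEq] at h ⊢
    omega⟩

lemma ι_apply (v : ℕ × ℕ × ℕ × ℕ) :
    ι v = ((v.1 : ℤ), (v.2.1 : ℤ), (v.2.2.1 : ℤ), (v.2.2.2 : ℤ)) := rfl

theorem stmt9 (n : ℕ) (hn : 0 < n) :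
    {v : ℤ × ℤ × ℤ × ℤ | (((v.1 : ℝ), (v.2.1 : ℝ), (v.2.2.1 : ℝ), (v.2.2.2 : ℝ)) : ℝ × ℝ × ℝ × ℝ) ∈ (n : ℝ) • nabla}.ncard
        = Nat.choose (n + 4) 4 + Nat.choose (n + 3) 4 ∧
      ((Nat.choose (n + 4) 4 + Nat.choose (n + 3) 4 : ℚ))
        = (2 * (n : ℚ) ^ 4 + 16 * (n : ℚ) ^ 3 + 46 * (n : ℚ) ^ 2 + 56 * (n : ℚ) ^ 1 + 24) / 24 := by
  constructor
  · have hset : {v : ℤ × ℤ × ℤ × ℤ |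
        (((v.1 : ℝ), (v.2.1 : ℝ), (v.2.2.1 : ℝ), (v.2.2.2 : ℝ)) : ℝ × ℝ × ℝ × ℝ) ∈ (n : ℝ) • nabla}
        = ↑((N n).map ι) := by
      ext v
      rw [Set.mem_setOf_eq, mem_iff n hn v, Finset.mem_coe, Finset.mem_map]
      constructor
      · rintro ⟨h1, h2, h3, h4, h5, h6⟩
        refine ⟨(v.1.toNat, v.2.1.toNat, v.2.2.1.toNat, v.2.2.2.toNat), ?_, ?_⟩
        · simp only [N, mem_filter, mem_product, mem_range]
          omega
        · obtain ⟨a,b,c,d⟩ := v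
          simp only [ι_apply, Function.Embedding.coeFn_mk, Prod.mk.injEq] at *
          omega
      · rintro ⟨u, hu, rfl⟩
        obtain ⟨a,b,c,d⟩ := u
        simp only [N, mem_filter, mem_product, mem_range, ι_apply,
          Function.Embedding.coeFn_mk] at hu ⊢
        omega
    rw [hset, Set.ncard_coe_finset, Finset.card_map, cardN]
    have h24 : 24 * A n = 24 * (Nat.choose (n + 4) 4 + Nat.choose (n + 3) 4) := by
      rw [Nat.mul_add, c4, c4', keyA]
    exact Nat.eq_of_mul_eq_mul_left (by norm_num) h24
  · have q1 : (24:ℚ) * (Nat.choose (n+4) 4 : ℚ)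
        = ((n:ℚ)+1)*((n:ℚ)+2)*((n:ℚ)+3)*((n:ℚ)+4) := by
      have h : ((24 * Nat.choose (n+4) 4 : ℕ) : ℚ)
          = (((n+1)*(n+2)*(n+3)*(n+4) : ℕ) : ℚ) := by exact_mod_cast c4 n
      push_cast at h
      linear_combination h
    have q2 : (24:ℚ) * (Nat.choose (n+3) 4 : ℚ)
        = (n:ℚ)*((n:ℚ)+1)*((n:ℚ)+2)*((n:ℚ)+3) := by
      have h : ((24 * Nat.choose (n+3) 4 : ℕ) : ℚ)
          = ((n*(n+1)*(n+2)*(n+3) : ℕ) : ℚ) := by exact_mod_cast c4' n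
      push_cast at h
      linear_combination h
    rw [eq_div_iff (by norm_num : (24:ℚ) ≠ 0)]
    linear_combination q1 + q2
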